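/- Suppose ν = ν^θ < cf(κ) ≤ 2^ν for infinite cardinals θ, ν, κ. Then there exists a colouring c : [κ]² → θ such that for every sequence ⟨B_τ : τ < θ⟩ of cofinal subsets of κ, there exists η < ν such that for every τ < θ, the set {β ∈ B_τ \ (η+1) : c(η,β) = τ} is cofinal in κ. -/

import Mathlib

open Cardinal Ordinal Set

theorem ek_aux {T X V : Type*} [Nonempty T] [Nonempty V] (j : X → V → Bool)
    (hj : Function.Injective j) :
    ∃ F : ((T × T → V) × (T → (T × T → Bool))) → X → T,
      ∀ s : T → X, Function.Injective s → ∃ i, ∀ t, F i (s t) = t := by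
  classical
  refine ⟨fun i x => if h : ∃ t, i.2 t = fun p => j x (i.1 p) then h.choose
    else Classical.arbitrary T, ?_⟩
  intro s hs
  set d : T × T → V := fun p =>
    if h : ∃ v, j (s p.1) v ≠ j (s p.2) v then h.choose else Classical.arbitrary V with hd
  set w : T → (T × T → Bool) := fun t p => j (s t) (d p) with hw
  have hwinj : Function.Injective w := by
    intro t t' htt'
    by_contra hne
    have hex : ∃ v, j (s t) v ≠ j (s t') v := by
      by_contra h
      push_neg at h
      exact hne (hs (hj (funext h)))
    have h1 : j (s t) (d (t, t')) ≠ j (s t') (d (t, t')) := by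
      have hdtt : d (t, t') = hex.choose := by
        rw [hd]; exact dif_pos hex
      rw [hdtt]; exact hex.choose_spec
    exact h1 (congrFun htt' (t, t'))
  refine ⟨(d, w), fun t => ?_⟩
  have hex : ∃ t', w t' = fun p => j (s t) (d p) := ⟨t, rfl⟩
  simp only [dif_pos hex]
  exact hwinj hex.choose_spec

theorem stmt_12 (θ ν κ : Cardinal) (hθ : ℵ₀ ≤ θ) (hν : ℵ₀ ≤ ν) (hκ : ℵ₀ ≤ κ)
    (hpow : ν ^ θ = ν) (h1 : ν < (κ.ord).cof) (h2 : (κ.ord).cof ≤ 2 ^ ν) :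
    ∃ c : Ordinal → Ordinal → Ordinal,
      (∀ α β : Ordinal, α < β → β < κ.ord → c α β < θ.ord) ∧
      ∀ B : Ordinal → Set Ordinal,
        (∀ τ < θ.ord, B τ ⊆ Set.Iio κ.ord ∧ ∀ α < κ.ord, ∃ β ∈ B τ, α ≤ β) →
        ∃ η < ν.ord, ∀ τ < θ.ord, ∀ α < κ.ord,
          ∃ β ∈ B τ, η < β ∧ α ≤ β ∧ c η β = τ := by
  classical
  -- basic cardinal facts
  have h2ν : (2 : Cardinal) ≤ ν := by
    refine le_trans ?_ hν
    exact_mod_cast (Cardinal.nat_lt_aleph0 2).le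
  have h2θν : (2 : Cardinal) ^ θ ≤ ν := by
    calc (2:Cardinal) ^ θ ≤ ν ^ θ := Cardinal.power_le_power_right h2ν
    _ = ν := hpow
  have hθν : θ < ν := lt_of_lt_of_le (Cardinal.cantor θ) h2θν
  have hθcf : θ < κ.ord.cof := hθν.trans h1
  have hνκ : ν < κ := h1.trans_le (Ordinal.cof_ord_le κ)
  obtain ⟨ι, f, hlsub, hmkι⟩ := Ordinal.exists_lsub_cof κ.ord
  have hι0 : Nonempty ι := by
    rw [← Cardinal.mk_ne_zero_iff, hmkι]
    exact (Cardinal.aleph0_pos.trans_le (hν.trans h1.le)).ne'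
  set T := θ.ord.ToType with hT
  set W := ν.ord.ToType with hW
  have hmkT : #T = θ := by rw [hT, Cardinal.mk_toType, Cardinal.card_ord]
  have hmkW : #W = ν := by rw [hW, Cardinal.mk_toType, Cardinal.card_ord]
  have hT0 : Nonempty T := by
    rw [← Cardinal.mk_ne_zero_iff, hmkT]
    exact (Cardinal.aleph0_pos.trans_le hθ).ne'
  have hW0 : Nonempty W := by
    rw [← Cardinal.mk_ne_zero_iff, hmkW]
    exact (Cardinal.aleph0_pos.trans_le hν).ne'
  -- an injection from ι into the Boolean cube on W
  have hcard : #ι ≤ #(W → Bool) := by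
    rw [hmkι]
    have hWB : #(W → Bool) = 2 ^ ν := by
      simp [Cardinal.mk_arrow, hmkW, Cardinal.mk_bool, Cardinal.lift_two]
    rw [hWB]
    exact h2
  obtain ⟨j⟩ := Cardinal.le_def _ _ |>.1 hcard
  obtain ⟨F, hF⟩ := ek_aux (T := T) (V := W) (fun x => j x) j.injective
  -- a surjection from W onto the index type
  have hTT : #(T × T) = θ := by
    simp only [Cardinal.mk_prod, Cardinal.lift_id, hmkT]
    exact Cardinal.mul_eq_self hθ
  have ha : #(T × T → W) = ν := by
    simp only [Cardinal.mk_arrow, Cardinal.lift_id, hmkW, hTT]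
    exact hpow
  have hb : #(T → T × T → Bool) ≤ ν := by
    have hZ : #(T × T → Bool) = 2 ^ θ := by
      simp [Cardinal.mk_arrow, hTT, Cardinal.mk_bool, Cardinal.lift_two]
    have hstep : #(T → T × T → Bool) = (2 ^ θ) ^ θ := by
      simp only [Cardinal.mk_arrow, Cardinal.lift_id, hZ, hmkT]
    rw [hstep, ← Cardinal.power_mul, Cardinal.mul_eq_self hθ]
    exact h2θν
  have hmkI : #((T × T → W) × (T → (T × T → Bool))) ≤ ν := by
    simp only [Cardinal.mk_prod, Cardinal.lift_id]
    calc #(T × T → W) * #(T → T × T → Bool) ≤ ν * ν := mul_le_mul' ha.le hb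
    _ = ν := Cardinal.mul_eq_self hν
  have hI0 : Nonempty ((T × T → W) × (T → (T × T → Bool))) := inferInstance
  obtain ⟨g⟩ := Cardinal.le_def _ _ |>.1 (hmkI.trans_eq hmkW.symm)
  set e : W → ((T × T → W) × (T → (T × T → Bool))) := Function.invFun g with he
  have hesurj : Function.Surjective e := Function.invFun_surjective g.injective
  -- the coordinate map
  set xmap : Ordinal → ι := fun β =>
    if h : ∃ i, β ≤ f i then h.choose else Classical.arbitrary ι with hxm
  have hxmap : ∀ β < κ.ord, β ≤ f (xmap β) := by
    intro β hβ
    have h : ∃ i, β ≤ f i := by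
      rw [← Ordinal.lt_lsub_iff, hlsub]; exact hβ
    rw [hxm]
    simp only [dif_pos h]
    exact h.choose_spec
  have hfκ : ∀ i, f i < κ.ord := by
    intro i; rw [← hlsub]; exact Ordinal.lt_lsub f i
  set enumW := (Ordinal.ToType.mk (o := ν.ord)) with henW
  set enumT := (Ordinal.ToType.mk (o := θ.ord)) with henT
  refine ⟨fun η β => if hη : η < ν.ord then
      (enumT.symm (F (e (enumW ⟨η, hη⟩)) (xmap β))).val else 0, ?_, ?_⟩
  · intro α β hab hβ
    dsimp only
    split_ifs with hη
    · exact (enumT.symm _).2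
    · rw [← Cardinal.ord_zero]
      exact Cardinal.ord_lt_ord.2 (Cardinal.aleph0_pos.trans_le hθ)
  · intro B hB
    by_contra hcon
    push_neg at hcon
    choose τfun hτθ αfun hακ hbad using hcon
    have hνκord : ν.ord < κ.ord := Cardinal.ord_lt_ord.2 hνκ
    have hsupA : iSup (fun n : W => αfun ((enumW.symm n) : Iio ν.ord).val
        (enumW.symm n).2) < κ.ord :=
      Ordinal.iSup_lt_of_lt_cof (by rw [hmkW]; exact h1) (fun n => hακ _ _)
    set αstar : Ordinal := max ν.ord (iSup (fun n : W =>
      αfun ((enumW.symm n) : Iio ν.ord).val (enumW.symm n).2)) with hαs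
    have hαstar : αstar < κ.ord := max_lt hνκord hsupA
    have hpickex : ∀ τ, τ < θ.ord → ∀ g : ∀ o, o < τ → Ordinal,
        ∃ β, β ∈ B τ ∧ max αstar (Ordinal.bsup τ fun o h => f (xmap (g o h)) + 1) ≤ β := by
      intro τ hτ g
      have hbd : max αstar (Ordinal.bsup τ fun o h => f (xmap (g o h)) + 1) < κ.ord := by
        refine max_lt hαstar (Ordinal.bsup_lt_ord ?_ ?_)
        · exact lt_of_le_of_lt ((Ordinal.card_le_card hτ.le).trans_eq (Cardinal.card_ord θ)) hθcf
        · intro o ho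
          rw [Ordinal.add_one_eq_succ]
          exact (Cardinal.isSuccLimit_ord hκ).succ_lt (hfκ _)
      obtain ⟨β, hβm, hβle⟩ := (hB τ hτ).2 _ hbd
      exact ⟨β, hβm, hβle⟩
    obtain ⟨βfun, hβspec⟩ : ∃ βfun : Ordinal → Ordinal, ∀ τ (hτ : τ < θ.ord),
        βfun τ ∈ B τ ∧ max αstar (Ordinal.bsup τ fun o _ => f (xmap (βfun o)) + 1) ≤ βfun τ := by
      refine ⟨WellFounded.fix Ordinal.lt_wf (fun τ g =>
        if hτ : τ < θ.ord then (hpickex τ hτ g).choose else 0), fun τ hτ => ?_⟩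
      have h := WellFounded.fix_eq Ordinal.lt_wf (fun τ g =>
        if hτ : τ < θ.ord then (hpickex τ hτ g).choose else 0) τ
      rw [h, dif_pos hτ]
      exact (hpickex τ hτ _).choose_spec
    have hβB : ∀ τ (hτ : τ < θ.ord), βfun τ ∈ B τ := fun τ hτ => (hβspec τ hτ).1
    have hβκ : ∀ τ (hτ : τ < θ.ord), βfun τ < κ.ord := fun τ hτ => (hB τ hτ).1 (hβB τ hτ)
    have hβα : ∀ τ (hτ : τ < θ.ord), αstar ≤ βfun τ :=
      fun τ hτ => le_trans (le_max_left _ _) (hβspec τ hτ).2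
    have hβmono : ∀ τ (hτ : τ < θ.ord), ∀ o, o < τ → f (xmap (βfun o)) < βfun τ := by
      intro τ hτ o ho
      have h2' := (Ordinal.le_bsup (fun o _ => f (xmap (βfun o)) + 1) o ho).trans
        ((le_max_right _ _).trans (hβspec τ hτ).2)
      rw [Ordinal.add_one_eq_succ] at h2'
      exact Order.succ_le_iff.mp h2'
    have hxinj : ∀ τ₁, τ₁ < θ.ord → ∀ τ₂, τ₂ < θ.ord → τ₁ ≠ τ₂ →
        xmap (βfun τ₁) ≠ xmap (βfun τ₂) := by
      have key : ∀ τ₁, τ₁ < θ.ord → ∀ τ₂, τ₂ < θ.ord → τ₁ < τ₂ →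
          xmap (βfun τ₁) ≠ xmap (βfun τ₂) := by
        intro τ₁ h₁ τ₂ h₂ hlt heq
        have hlt1 : f (xmap (βfun τ₁)) < βfun τ₂ := hβmono τ₂ h₂ τ₁ hlt
        have hle2 : βfun τ₂ ≤ f (xmap (βfun τ₂)) := hxmap _ (hβκ τ₂ h₂)
        rw [heq] at hlt1
        exact absurd (hlt1.trans_le hle2) (lt_irrefl _)
      intro τ₁ h₁ τ₂ h₂ hne
      rcases hne.lt_or_gt with h | h
      · exact key τ₁ h₁ τ₂ h₂ h
      · exact fun heq => key τ₂ h₂ τ₁ h₁ h heq.symm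
    have hsinj : Function.Injective (fun t : T => xmap (βfun ((enumT.symm t) : Iio θ.ord).val)) := by
      intro t t' htt'
      by_contra hne
      have hval : ((enumT.symm t) : Iio θ.ord).val ≠ ((enumT.symm t') : Iio θ.ord).val := by
        intro hv
        refine hne ?_
        have h3 : enumT.symm t = enumT.symm t' := Subtype.ext hv
        simpa using congrArg enumT h3
      exact hxinj _ (enumT.symm t).2 _ (enumT.symm t').2 hval htt'
    obtain ⟨i, hi⟩ := hF _ hsinj
    obtain ⟨n, hn⟩ := hesurj i
    have hη : ((enumW.symm n : Iio ν.ord)).val < ν.ord := (enumW.symm n).2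
    set η : Ordinal := ((enumW.symm n : Iio ν.ord)).val with hηdef
    have hτ : τfun η hη < θ.ord := hτθ η hη
    set τ : Ordinal := τfun η hη with hτdef
    have hβB' : βfun τ ∈ B τ := hβB τ hτ
    have hηβ : η < βfun τ := hη.trans_le ((le_max_left _ _).trans (hβα τ hτ))
    have hαβ : αfun η hη ≤ βfun τ := by
      refine le_trans ?_ (hβα τ hτ)
      refine le_trans ?_ (le_max_right _ _)
      exact Ordinal.le_iSup (fun n : W => αfun ((enumW.symm n) : Iio ν.ord).val
        (enumW.symm n).2) n
    have hceq : (if hη' : η < ν.ord then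
        ((enumT.symm (F (e (enumW ⟨η, hη'⟩)) (xmap (βfun τ)))) : Iio θ.ord).val else 0) = τ := by
      rw [dif_pos hη]
      have hnn : enumW ⟨η, hη⟩ = n := by
        have h4 : (⟨η, hη⟩ : Iio ν.ord) = enumW.symm n := Subtype.ext rfl
        rw [h4]
        exact enumW.apply_symm_apply n
      rw [hnn, hn]
      have hst : xmap (βfun ((enumT.symm (enumT ⟨τ, hτ⟩)) : Iio θ.ord).val) = xmap (βfun τ) := by
        rw [OrderIso.symm_apply_apply]
      rw [← hst, hi (enumT ⟨τ, hτ⟩), OrderIso.symm_apply_apply]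
    exact hbad η hη (βfun τ) hβB' hηβ hαβ hceq
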